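/- For all w, x, y ∈ V and every j ∈ {1,…,N}: if Φ_{w,j}(x) = Φ_{w,j}(y) then there exist h1, h2 ∈ G with ⟨w, U_{h1}x − U_{h2}y⟩ = 0; i.e., the set F_{x,y,j} = {w ∈ V : Φ_{w,j}(x) = Φ_{w,j}(y)} is contained in ⋃_{h1,h2∈G} {U_{h1}x − U_{h2}y}^⊥. Moreover, if x ≁ y then U_{h1}x − U_{h2}y ≠ 0 for all h1, h2 ∈ G, so each set {U_{h1}x − U_{h2}y}^⊥ in this union is a linear subspace of dimension d − 1. -/
import Mathlib


open scoped RealInnerProductSpace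
open MeasureTheory

/-- `coorbit U w x j` is the `j`-th largest entry (with multiplicity, `1 ≤ j ≤ N = |G|`)
of the `N`-tuple `(⟨U_g w, x⟩)_{g ∈ G}`. -/
noncomputable def coorbit {d : ℕ} {G : Type} [Group G] [Fintype G]
    (U : G →* (EuclideanSpace ℝ (Fin d) ≃ₗᵢ[ℝ] EuclideanSpace ℝ (Fin d)))
    (w x : EuclideanSpace ℝ (Fin d)) (j : ℕ) : ℝ :=
  ((Finset.univ.val.map fun g : G => ⟪(U g) w, x⟫).sort (· ≤ ·)).getD (Fintype.card G - j) 0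

/-- `dhat U x y = min_{g ∈ G} ‖x − U_g y‖`, the orbit distance. -/
noncomputable def dhat {d : ℕ} {G : Type} [Group G] [Fintype G]
    (U : G →* (EuclideanSpace ℝ (Fin d) ≃ₗᵢ[ℝ] EuclideanSpace ℝ (Fin d)))
    (x y : EuclideanSpace ℝ (Fin d)) : ℝ :=
  Finset.univ.inf' Finset.univ_nonempty fun g : G => ‖x - (U g) y‖

/-- if `Φ_{w,j}(x) = Φ_{w,j}(y)` then `w ⟂ (U_{h₁}x − U_{h₂}y)` for some
`h₁, h₂ ∈ G`; i.e. `F_{x,y,j} ⊆ ⋃_{h₁,h₂} {U_{h₁}x − U_{h₂}y}^⊥`.  Moreover if `x ≁ y`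
then each vector `U_{h₁}x − U_{h₂}y` is nonzero, so each `{U_{h₁}x − U_{h₂}y}^⊥` is a
linear subspace of dimension `d − 1`. -/

private lemma coorbit_mem {d : ℕ} {G : Type} [Group G] [Fintype G]
    (U : G →* (EuclideanSpace ℝ (Fin d) ≃ₗᵢ[ℝ] EuclideanSpace ℝ (Fin d)))
    (w x : EuclideanSpace ℝ (Fin d)) (j : ℕ) (hj1 : 1 ≤ j) (hj2 : j ≤ Fintype.card G) :
    ∃ g : G, coorbit U w x j = ⟪w, (U g) x⟫ := by
  unfold coorbit
  have hlen : ((Finset.univ.val.map fun g : G => ⟪(U g) w, x⟫).sort (· ≤ ·)).length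
      = Fintype.card G := by
    rw [Multiset.length_sort, Multiset.card_map]; rfl
  have hlt : Fintype.card G - j <
      ((Finset.univ.val.map fun g : G => ⟪(U g) w, x⟫).sort (· ≤ ·)).length := by
    rw [hlen]; omega
  rw [List.getD_eq_getElem _ _ hlt]
  have hmem := List.getElem_mem hlt
  rw [Multiset.mem_sort, Multiset.mem_map] at hmem
  obtain ⟨g, -, hg⟩ := hmem
  refine ⟨g⁻¹, ?_⟩
  rw [← hg, map_inv]
  exact (U g).inner_map_eq_flip w x

theorem stmt4 {d : ℕ} (hd : 2 ≤ d) {G : Type} [Group G] [Fintype G]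
    (U : G →* (EuclideanSpace ℝ (Fin d) ≃ₗᵢ[ℝ] EuclideanSpace ℝ (Fin d))) :
    (∀ (w x y : EuclideanSpace ℝ (Fin d)) (j : ℕ), 1 ≤ j → j ≤ Fintype.card G →
      coorbit U w x j = coorbit U w y j →
      ∃ h1 h2 : G, ⟪w, (U h1) x - (U h2) y⟫ = 0) ∧
    (∀ x y : EuclideanSpace ℝ (Fin d), ¬(∃ g : G, (U g) x = y) →
      ∀ h1 h2 : G, (U h1) x - (U h2) y ≠ 0 ∧
        Module.finrank ℝ ((Submodule.span ℝ {(U h1) x - (U h2) y})ᗮ) = d - 1) := by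
  constructor
  · intro w x y j hj1 hj2 heq
    obtain ⟨g1, hg1⟩ := coorbit_mem U w x j hj1 hj2
    obtain ⟨g2, hg2⟩ := coorbit_mem U w y j hj1 hj2
    refine ⟨g1, g2, ?_⟩
    rw [inner_sub_right, ← hg1, ← hg2, heq, sub_self]
  · intro x y hxy h1 h2
    have hne : (U h1) x - (U h2) y ≠ 0 := by
      intro h
      apply hxy
      refine ⟨h2⁻¹ * h1, ?_⟩
      have : (U h1) x = (U h2) y := by linear_combination (norm := module) h
      rw [map_mul, map_inv]
      simp [this]
    refine ⟨hne, ?_⟩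
    have hfin : Module.finrank ℝ (Submodule.span ℝ {(U h1) x - (U h2) y}) = 1 :=
      finrank_span_singleton hne
    have := Submodule.finrank_add_finrank_orthogonal
      (K := Submodule.span ℝ {(U h1) x - (U h2) y})
    rw [hfin] at this
    have hdim : Module.finrank ℝ (EuclideanSpace ℝ (Fin d)) = d := by simp
    omega
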